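/- Let g ≥ 0, r ≥ 1, and let F(x,y,u,t) be the rational power series (1/(1+xyut)^{r-1}) · Φ_g{(1-xyz^2)(1-xz)^g(1-yz)^g} / ((1-t)(1-x^2yu^2t^2)^g(1-xy^2u^2t^2)^g). Then Σ_i ([u^i t^{i+1}] F) z^i = Ψ_g{(1-xyz^2)(1-xz)^g(1-yz)^g} / ((1+xyz)^{r-1}(1-x^2yz^2)^g(1-xy^2z^2)^g), where Ψ_g is the ℚ[x,y]-linear map with Ψ_g(z^j) = z^j for 0 ≤ j ≤ g, Ψ_g(z^{g+1}) = 0, and Ψ_g(z^j) = z^{j-1} for g+2 ≤ j ≤ 2g+2. -/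

import Mathlib

open MvPolynomial

noncomputable section

/-- The coefficient ring `ℚ[x,y]`, with `x = X 0`, `y = X 1`. -/
abbrev Rxy := MvPolynomial (Fin 2) ℚ

/-- Formal power series in `u, t` (`u` is variable `0`, `t` is variable `1`) over `ℚ[x,y]`. -/
abbrev Sut := MvPowerSeries (Fin 2) Rxy

/-- Inclusion of constants `ℚ[x,y] → ℚ[x,y][[u,t]]`. -/
def Cc : Rxy →+* Sut := MvPowerSeries.C (σ := Fin 2) (R := Rxy)

/-- `(1 - xyz²)(1 - xz)^g (1 - yz)^g` as a polynomial in `z` over `ℚ[x,y]`. -/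
def Wpoly (g : ℕ) : Polynomial Rxy :=
  (1 - Polynomial.C (X 0 * X 1) * Polynomial.X ^ 2) *
    (1 - Polynomial.C (X 0) * Polynomial.X) ^ g *
    (1 - Polynomial.C (X 1) * Polynomial.X) ^ g

/-- The numerator `N = Φ_g{(1-xyz²)(1-xz)^g(1-yz)^g}`, where `Φ_g(z^j) = u^j t^j` for
`0 ≤ j ≤ g`, `Φ_g(z^{g+1}) = 0` and `Φ_g(z^j) = u^{j-1} t^j` for `g+2 ≤ j ≤ 2g+2`. -/
def NumS (g : ℕ) : Sut :=
  ∑ j ∈ Finset.range (2 * g + 3),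
    (if j ≤ g then MvPowerSeries.X 0 ^ j * MvPowerSeries.X 1 ^ j
     else if j = g + 1 then 0
     else MvPowerSeries.X 0 ^ (j - 1) * MvPowerSeries.X 1 ^ j) * Cc ((Wpoly g).coeff j)

/-- The denominator `(1+xyut)^{r-1} (1-t) (1-x²yu²t²)^g (1-xy²u²t²)^g`. -/
def DenS (g r : ℕ) : Sut :=
  (1 + Cc (X 0 * X 1) * MvPowerSeries.X 0 * MvPowerSeries.X 1) ^ (r - 1) *
    (1 - MvPowerSeries.X 1) *
    (1 - Cc (X 0 ^ 2 * X 1) * MvPowerSeries.X 0 ^ 2 * MvPowerSeries.X 1 ^ 2) ^ g *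
    (1 - Cc (X 0 * X 1 ^ 2) * MvPowerSeries.X 0 ^ 2 * MvPowerSeries.X 1 ^ 2) ^ g

/-- The coefficient `c_{i,n} ∈ ℚ[x,y]` of `u^i t^n` in a power series. -/
def coeffUT (F : Sut) (i n : ℕ) : Rxy :=
  MvPowerSeries.coeff (σ := Fin 2) (R := Rxy) (Finsupp.single 0 i + Finsupp.single 1 n) F

/-- `Ψ_g{(1-xyz²)(1-xz)^g(1-yz)^g}` where `Ψ_g(z^j) = z^j` for `0 ≤ j ≤ g`,
`Ψ_g(z^{g+1}) = 0`, and `Ψ_g(z^j) = z^{j-1}` for `g+2 ≤ j ≤ 2g+2`. -/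
def PsiW (g : ℕ) : PowerSeries Rxy :=
  (∑ j ∈ Finset.range (g + 1),
      PowerSeries.C (R := Rxy) ((Wpoly g).coeff j) * PowerSeries.X ^ j) +
  ∑ j ∈ Finset.Ico (g + 2) (2 * g + 3),
      PowerSeries.C (R := Rxy) ((Wpoly g).coeff j) * PowerSeries.X ^ (j - 1)

noncomputable section
/-- `sg a b = single 0 a + single 1 b` on `Fin 2`. -/
def sg (a b : ℕ) : Fin 2 →₀ ℕ := Finsupp.single 0 a + Finsupp.single 1 b

@[simp] lemma sg_apply0 (a b : ℕ) : sg a b 0 = a := by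
  simp [sg, Finsupp.single_apply]

@[simp] lemma sg_apply1 (a b : ℕ) : sg a b 1 = b := by
  simp [sg, Finsupp.single_apply]

lemma eq_sg (s : Fin 2 →₀ ℕ) : s = sg (s 0) (s 1) := by
  ext i
  fin_cases i <;> simp

@[simp] lemma sg_inj {a b c d : ℕ} : sg a b = sg c d ↔ a = c ∧ b = d := by
  constructor
  · intro h
    constructor
    · have := congrArg (fun f => f 0) h; simpa using this
    · have := congrArg (fun f => f 1) h; simpa using this
  · rintro ⟨rfl, rfl⟩; rfl

lemma sg_add (a b c d : ℕ) : sg a b + sg c d = sg (a + c) (b + d) := by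
  ext i; fin_cases i <;> simp

@[simp] lemma sg_zero : sg 0 0 = 0 := by ext i; fin_cases i <;> simp


/-- raw diagonal function -/
def diagFun (P : PowerSeries Rxy) : Sut :=
  fun s => if s 0 = s 1 then PowerSeries.coeff (s 0) P else 0

lemma coeff_diagFun (P : PowerSeries Rxy) (s : Fin 2 →₀ ℕ) :
    MvPowerSeries.coeff s (diagFun P) =
      if s 0 = s 1 then PowerSeries.coeff (s 0) P else 0 := rfl

lemma coeff_diagFun_mul (P : PowerSeries Rxy) (F : Sut) (i n : ℕ) :
    MvPowerSeries.coeff (sg i n) (diagFun P * F) =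
      ∑ a ∈ Finset.range (min i n + 1),
        PowerSeries.coeff a P * MvPowerSeries.coeff (sg (i - a) (n - a)) F := by
  rw [MvPowerSeries.coeff_mul]
  rw [← Finset.sum_filter_of_ne (p := fun p : (Fin 2 →₀ ℕ) × (Fin 2 →₀ ℕ) => p.1 0 = p.1 1)
      (by
        intro p _ hp
        by_contra h
        apply hp
        rw [coeff_diagFun, if_neg h, zero_mul])]
  refine Finset.sum_nbij' (fun p => p.1 0) (fun a => (sg a a, sg (i - a) (n - a))) ?_ ?_ ?_ ?_ ?_
  · intro p hp
    simp only [Finset.mem_filter, Finset.HasAntidiagonal.mem_antidiagonal] at hp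
    obtain ⟨hsum, hdiag⟩ := hp
    have h0 := congrArg (fun f => f 0) hsum
    have h1 := congrArg (fun f => f 1) hsum
    simp only [Finsupp.add_apply, sg_apply0, sg_apply1] at h0 h1
    simp only [Finset.mem_range]
    omega
  · intro a ha
    simp only [Finset.mem_range] at ha
    refine Finset.mem_filter.mpr ⟨Finset.HasAntidiagonal.mem_antidiagonal.mpr ?_, by simp⟩
    rw [sg_add]
    congr 1 <;> omega
  · intro p hp
    simp only [Finset.mem_filter, Finset.HasAntidiagonal.mem_antidiagonal] at hp
    obtain ⟨hsum, hdiag⟩ := hp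
    have h0 := congrArg (fun f => f 0) hsum
    have h1 := congrArg (fun f => f 1) hsum
    simp only [Finsupp.add_apply, sg_apply0, sg_apply1] at h0 h1
    have e1 : p.1 = sg (p.1 0) (p.1 0) := by
      ext k; fin_cases k <;> simp <;> omega
    have e2 : p.2 = sg (i - p.1 0) (n - p.1 0) := by
      ext k; fin_cases k <;> simp <;> omega
    rw [Prod.ext_iff]
    exact ⟨e1.symm, e2.symm⟩
  · intro a ha
    simp
  · intro p hp
    simp only [Finset.mem_filter, Finset.HasAntidiagonal.mem_antidiagonal] at hp
    obtain ⟨hsum, hdiag⟩ := hp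
    have h0 := congrArg (fun f => f 0) hsum
    have h1 := congrArg (fun f => f 1) hsum
    simp only [Finsupp.add_apply, sg_apply0, sg_apply1] at h0 h1
    rw [coeff_diagFun, if_pos hdiag]
    have e2 : p.2 = sg (i - p.1 0) (n - p.1 0) := by
      ext k; fin_cases k <;> simp <;> omega
    rw [← e2]


/-- `z ↦ ut` as a ring hom `ℚ[x,y][[z]] → ℚ[x,y][[u,t]]`. -/
def diagMap : PowerSeries Rxy →+* Sut where
  toFun := diagFun
  map_one' := by
    apply MvPowerSeries.ext
    intro s
    rw [eq_sg s, coeff_diagFun]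
    simp only [sg_apply0, sg_apply1]
    rw [MvPowerSeries.coeff_one]
    by_cases h : s 0 = s 1
    · rw [if_pos h]
      by_cases h0 : s 0 = 0
      · rw [if_pos (by rw [← sg_zero]; exact sg_inj.mpr ⟨h0, h ▸ h0⟩)]
        simp [h0]
      · rw [if_neg (by rw [← sg_zero, sg_inj]; tauto), PowerSeries.coeff_one, if_neg h0]
    · rw [if_neg h, if_neg (by rw [← sg_zero, sg_inj]; intro ⟨a, b⟩; exact h (a.trans b.symm))]
  map_mul' := by
    intro P Q
    apply MvPowerSeries.ext
    intro s
    rw [eq_sg s, coeff_diagFun_mul, coeff_diagFun]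
    simp only [sg_apply0, sg_apply1]
    by_cases h : s 0 = s 1
    · rw [if_pos h, ← h, min_self, PowerSeries.coeff_mul,
        Finset.Nat.sum_antidiagonal_eq_sum_range_succ_mk]
      refine Finset.sum_congr rfl fun a ha => ?_
      rw [coeff_diagFun]
      simp
    · rw [if_neg h]
      refine (Finset.sum_eq_zero fun a ha => ?_).symm
      simp only [Finset.mem_range] at ha
      rw [coeff_diagFun]
      simp only [sg_apply0, sg_apply1]
      rw [if_neg (by omega), mul_zero]
  map_zero' := by
    apply MvPowerSeries.ext
    intro s
    rw [coeff_diagFun]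
    simp
  map_add' := by
    intro P Q
    apply MvPowerSeries.ext
    intro s
    rw [map_add, coeff_diagFun, coeff_diagFun, coeff_diagFun]
    split <;> simp

lemma diagMap_C (c : Rxy) : diagMap (PowerSeries.C (R := Rxy) c) = Cc c := by
  apply MvPowerSeries.ext
  intro s
  show MvPowerSeries.coeff s (diagFun _) = _
  rw [eq_sg s, coeff_diagFun]
  simp only [sg_apply0, sg_apply1]
  rw [Cc, MvPowerSeries.coeff_C]
  by_cases h : s 0 = s 1
  · rw [if_pos h, PowerSeries.coeff_C]
    by_cases h0 : s 0 = 0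
    · rw [if_pos h0, if_pos (by rw [← sg_zero]; exact sg_inj.mpr ⟨h0, h ▸ h0⟩)]
    · rw [if_neg h0, if_neg (by rw [← sg_zero, sg_inj]; tauto)]
  · rw [if_neg h, if_neg (by rw [← sg_zero, sg_inj]; intro ⟨a, b⟩; exact h (a.trans b.symm))]

lemma diagMap_X : diagMap PowerSeries.X = MvPowerSeries.X 0 * MvPowerSeries.X 1 := by
  apply MvPowerSeries.ext
  intro s
  show MvPowerSeries.coeff s (diagFun _) = _
  have : (MvPowerSeries.X 0 * MvPowerSeries.X 1 : Sut) = MvPowerSeries.monomial (sg 1 1) 1 := by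
    rw [MvPowerSeries.X, MvPowerSeries.X, MvPowerSeries.monomial_mul_monomial, one_mul, sg]
  rw [this, eq_sg s, coeff_diagFun, MvPowerSeries.coeff_monomial]
  simp only [sg_apply0, sg_apply1]
  by_cases h : s 0 = s 1
  · rw [if_pos h, PowerSeries.coeff_X]
    by_cases h0 : s 0 = 1
    · rw [if_pos h0, if_pos (sg_inj.mpr ⟨h0, h ▸ h0⟩)]
    · rw [if_neg h0, if_neg (by rw [sg_inj]; tauto)]
  · rw [if_neg h, if_neg (by rw [sg_inj]; intro ⟨a, b⟩; exact h (a.trans b.symm))]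



lemma coeffUT_eq (F : Sut) (i n : ℕ) :
    coeffUT F i n = MvPowerSeries.coeff (sg i n) F := rfl

/-- the extraction `F ↦ Σ_i ([u^i t^{i+1}] F) z^i`. -/
def Emap (F : Sut) : PowerSeries Rxy := PowerSeries.mk fun i => coeffUT F i (i + 1)

lemma Emap_diag_mul (P : PowerSeries Rxy) (F : Sut) :
    Emap (diagMap P * F) = P * Emap F := by
  apply PowerSeries.ext
  intro i
  rw [Emap, PowerSeries.coeff_mk, coeffUT_eq]
  show MvPowerSeries.coeff (sg i (i+1)) (diagFun P * F) = _
  rw [coeff_diagFun_mul, PowerSeries.coeff_mul,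
    Finset.Nat.sum_antidiagonal_eq_sum_range_succ_mk]
  have hmin : min i (i + 1) = i := by omega
  rw [hmin]
  refine Finset.sum_congr rfl fun a ha => ?_
  simp only [Finset.mem_range] at ha
  rw [Emap, PowerSeries.coeff_mk, coeffUT_eq]
  have : i + 1 - a = (i - a) + 1 := by omega
  rw [this]


open MvPolynomial

lemma coeff_mono (a b : ℕ) (c : Rxy) (i m : ℕ) :
    MvPowerSeries.coeff (sg i m)
        ((MvPowerSeries.X 0 ^ a * MvPowerSeries.X 1 ^ b : Sut) * Cc c) =
      if i = a ∧ m = b then c else 0 := by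
  rw [Cc, MvPowerSeries.coeff_mul_C, MvPowerSeries.X_pow_eq, MvPowerSeries.X_pow_eq,
    MvPowerSeries.monomial_mul_monomial, one_mul, MvPowerSeries.coeff_monomial,
    show Finsupp.single (0 : Fin 2) a + Finsupp.single 1 b = sg a b from rfl]
  by_cases h : sg i m = sg a b
  · rw [if_pos h, if_pos (sg_inj.mp h), one_mul]
  · rw [if_neg h, if_neg (fun hc => h (sg_inj.mpr hc)), zero_mul]

lemma coeff_X1_mul (G : Sut) (i n : ℕ) :
    MvPowerSeries.coeff (sg i n) (MvPowerSeries.X 1 * G) =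
      if n = 0 then 0 else MvPowerSeries.coeff (sg i (n - 1)) G := by
  rw [MvPowerSeries.X, MvPowerSeries.coeff_monomial_mul]
  rcases n with _ | m
  · rw [if_neg, if_pos rfl]
    intro hle
    have := Finsupp.le_def.mp hle 1
    simp at this
  · rw [if_pos, if_neg (by omega), one_mul]
    · have hsub : sg i (m + 1) - Finsupp.single 1 1 = sg i m := by
        ext k
        fin_cases k <;> simp [Finsupp.tsub_apply, Finsupp.single_apply, sg, Finsupp.add_apply]
      rw [hsub]
      simp
    · refine Finsupp.le_def.mpr fun k => ?_
      fin_cases k <;> simp [Finsupp.single_apply]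

lemma coeff_G (g : ℕ) (G : Sut) (hG : (1 - MvPowerSeries.X 1) * G = NumS g) (i : ℕ) :
    ∀ n, MvPowerSeries.coeff (sg i n) G =
      ∑ m ∈ Finset.range (n + 1), MvPowerSeries.coeff (sg i m) (NumS g) := by
  have key : ∀ n, MvPowerSeries.coeff (sg i n) G =
      MvPowerSeries.coeff (sg i n) (NumS g) +
        MvPowerSeries.coeff (sg i n) (MvPowerSeries.X 1 * G) := by
    intro n
    rw [← hG, sub_mul, one_mul, map_sub]
    ring
  intro n
  induction n with
  | zero =>
    rw [key 0, coeff_X1_mul, if_pos rfl, add_zero, Finset.sum_range_one]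
  | succ m ih =>
    rw [key (m + 1), coeff_X1_mul, if_neg (by omega), Nat.add_sub_cancel, ih]
    conv_rhs => rw [Finset.sum_range_succ]
    ring


lemma Emap_eq_PsiW (g : ℕ) (G : Sut) (hG : (1 - MvPowerSeries.X 1) * G = NumS g) :
    Emap G = PsiW g := by
  apply PowerSeries.ext
  intro i
  rw [Emap, PowerSeries.coeff_mk, coeffUT_eq, coeff_G g G hG i (i + 1)]
  set W : ℕ → Rxy := fun j => (Wpoly g).coeff j with hW
  have hsplit : ∀ f : ℕ → Rxy, ∑ j ∈ Finset.range (2 * g + 3), f j =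
      (∑ j ∈ Finset.range (g + 2), f j) + ∑ j ∈ Finset.Ico (g + 2) (2 * g + 3), f j := by
    intro f
    rw [Finset.range_eq_Ico, ← Finset.sum_Ico_consecutive f (Nat.zero_le (g + 2))
      (by omega : g + 2 ≤ 2 * g + 3), Finset.range_eq_Ico]
  have hL : ∑ m ∈ Finset.range (i + 1 + 1), MvPowerSeries.coeff (sg i m) (NumS g) =
      (if i ∈ Finset.range (g + 1) then W i else 0) +
      (if i + 1 ∈ Finset.Ico (g + 2) (2 * g + 3) then W (i + 1) else 0) := by
    simp only [NumS, map_sum]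
    rw [Finset.sum_comm]
    have hj : ∀ j ∈ Finset.range (2 * g + 3),
        (∑ m ∈ Finset.range (i + 1 + 1), MvPowerSeries.coeff (sg i m)
          ((if j ≤ g then MvPowerSeries.X 0 ^ j * MvPowerSeries.X 1 ^ j
            else if j = g + 1 then 0
            else MvPowerSeries.X 0 ^ (j - 1) * MvPowerSeries.X 1 ^ j) * Cc ((Wpoly g).coeff j)))
        = (if j ≤ g then (if i = j then W j else 0)
           else if j = g + 1 then 0
           else (if j = i + 1 then W j else 0)) := by
      intro j hjmem
      simp only [Finset.mem_range] at hjmem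
      by_cases h1 : j ≤ g
      · simp only [h1, if_true]
        simp only [coeff_mono]
        by_cases h2 : i = j
        · subst h2
          have e : ∀ m, (if i = i ∧ m = i then (Wpoly g).coeff i else 0)
              = if m = i then W i else 0 := fun m => by simp [hW]
          rw [Finset.sum_congr rfl fun m _ => e m, Finset.sum_ite_eq',
            if_pos (Finset.mem_range.mpr (by omega)), if_pos rfl]
        · have e : ∀ m, (if i = j ∧ m = j then (Wpoly g).coeff j else 0) = 0 :=
            fun m => by simp [h2]
          rw [Finset.sum_congr rfl fun m _ => e m, Finset.sum_const_zero, if_neg h2]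
      · simp only [h1, if_false]
        by_cases h2 : j = g + 1
        · simp [h2]
        · simp only [h2, if_false]
          simp only [coeff_mono]
          by_cases h3 : j = i + 1
          · subst h3
            have e : ∀ m, (if i = i + 1 - 1 ∧ m = i + 1 then (Wpoly g).coeff (i + 1) else 0)
                = if m = i + 1 then W (i + 1) else 0 := fun m => by
              simp [hW, Nat.add_sub_cancel]
            rw [Finset.sum_congr rfl fun m _ => e m, Finset.sum_ite_eq',
              if_pos (Finset.mem_range.mpr (by omega)), if_pos rfl]
          · have e : ∀ m, (if i = j - 1 ∧ m = j then (Wpoly g).coeff j else 0) = 0 :=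
              fun m => by rw [if_neg (by omega)]
            rw [Finset.sum_congr rfl fun m _ => e m, Finset.sum_const_zero, if_neg h3]
    rw [Finset.sum_congr rfl hj, hsplit, Finset.sum_range_succ,
      if_neg (by omega), if_pos rfl, add_zero]
    congr 1
    · have e : ∀ j ∈ Finset.range (g + 1),
          (if j ≤ g then (if i = j then W j else 0)
           else if j = g + 1 then 0
           else (if j = i + 1 then W j else 0)) = if i = j then W j else 0 := by
        intro j hjm
        rw [if_pos (by simpa [Nat.lt_succ_iff] using Finset.mem_range.mp hjm)]
      rw [Finset.sum_congr rfl e, Finset.sum_ite_eq]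
    · have e : ∀ j ∈ Finset.Ico (g + 2) (2 * g + 3),
          (if j ≤ g then (if i = j then W j else 0)
           else if j = g + 1 then 0
           else (if j = i + 1 then W j else 0)) = if j = i + 1 then W j else 0 := by
        intro j hjm
        have := Finset.mem_Ico.mp hjm
        rw [if_neg (by omega), if_neg (by omega)]
      rw [Finset.sum_congr rfl e, Finset.sum_ite_eq']
  rw [hL, PsiW, map_add, map_sum, map_sum]
  congr 1
  · have e : ∀ j ∈ Finset.range (g + 1),
        (PowerSeries.coeff i) (PowerSeries.C (R := Rxy) ((Wpoly g).coeff j) * PowerSeries.X ^ j)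
          = if i = j then W j else 0 := by
      intro j _
      rw [PowerSeries.coeff_C_mul, PowerSeries.coeff_X_pow, mul_ite, mul_one, mul_zero, hW]
    rw [Finset.sum_congr rfl e, Finset.sum_ite_eq]
  · have e : ∀ j ∈ Finset.Ico (g + 2) (2 * g + 3),
        (PowerSeries.coeff i)
            (PowerSeries.C (R := Rxy) ((Wpoly g).coeff j) * PowerSeries.X ^ (j - 1))
          = if j = i + 1 then W j else 0 := by
      intro j hjm
      have := Finset.mem_Ico.mp hjm
      rw [PowerSeries.coeff_C_mul, PowerSeries.coeff_X_pow, mul_ite, mul_one, mul_zero]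
      by_cases h : j = i + 1
      · rw [if_pos (by omega), if_pos h, hW]
      · rw [if_neg (by omega), if_neg h]
    rw [Finset.sum_congr rfl e, Finset.sum_ite_eq']


end

theorem stmt16 (g r : ℕ) (hr : 1 ≤ r) (F : Sut) (hF : DenS g r * F = NumS g) :
    ((1 + PowerSeries.C (R := Rxy) (X 0 * X 1) * PowerSeries.X) ^ (r - 1) *
        (1 - PowerSeries.C (R := Rxy) (X 0 ^ 2 * X 1) * PowerSeries.X ^ 2) ^ g *
        (1 - PowerSeries.C (R := Rxy) (X 0 * X 1 ^ 2) * PowerSeries.X ^ 2) ^ g) *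
      PowerSeries.mk (fun i => coeffUT F i (i + 1)) = PsiW g := by
  have hdiagD : diagMap ((1 + PowerSeries.C (R := Rxy) (X 0 * X 1) * PowerSeries.X) ^ (r - 1) *
      (1 - PowerSeries.C (R := Rxy) (X 0 ^ 2 * X 1) * PowerSeries.X ^ 2) ^ g *
      (1 - PowerSeries.C (R := Rxy) (X 0 * X 1 ^ 2) * PowerSeries.X ^ 2) ^ g) =
      (1 + Cc (X 0 * X 1) * MvPowerSeries.X 0 * MvPowerSeries.X 1) ^ (r - 1) *
      ((1 - Cc (X 0 ^ 2 * X 1) * MvPowerSeries.X 0 ^ 2 * MvPowerSeries.X 1 ^ 2) ^ g *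
      (1 - Cc (X 0 * X 1 ^ 2) * MvPowerSeries.X 0 ^ 2 * MvPowerSeries.X 1 ^ 2) ^ g) := by
    simp only [map_mul, map_pow, map_add, map_sub, map_one, diagMap_C, diagMap_X]
    ring
  have hMk : PowerSeries.mk (fun i => coeffUT F i (i + 1)) = Emap F := rfl
  rw [hMk, ← Emap_diag_mul, hdiagD]
  apply Emap_eq_PsiW
  rw [← hF, DenS]
  ring

end
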